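/- arXiv:1908.01453 — 3 statements merged into one kernel-verified Lean document; each statement's English description precedes it below -/
import Mathlib

section
/- Let f : ℝ → ℝ be continuous on [a, ∞), and for a function g define (J g)(x) = ∫_a^x g(t) dt. Then for every integer n ≥ 1 and every x ≥ a, the n-th iterate of J applied to f satisfies the Cauchy formula for repeated integration: (Jⁿ f)(x) = (1/(n−1)!) ∫_a^x (x − t)^{n−1} f(t) dt. -/
open intervalIntegral MeasureTheory

/-- Key lemma: for globally continuous `g`, the iterates of the primitive operator
satisfy the Cauchy formula. -/
private lemma cauchy_aux (a : ℝ) (J : (ℝ → ℝ) → (ℝ → ℝ))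
    (hJ : ∀ g : ℝ → ℝ, ∀ x : ℝ, J g x = ∫ t in a..x, g t) :
    ∀ n : ℕ, ∀ g : ℝ → ℝ, Continuous g → ∀ x : ℝ,
      (J^[n + 1] g) x = (1 / (n.factorial : ℝ)) * ∫ t in a..x, (x - t) ^ n * g t := by
  intro n
  induction n with
  | zero =>
    intro g hg x
    rw [zero_add, Function.iterate_one, hJ]
    simp
  | succ n ih =>
    intro g hg x
    have hJg_cont : Continuous (J g) := by
      have : Continuous (fun y => ∫ t in a..y, g t) :=
        intervalIntegral.continuous_primitive (fun c d => hg.intervalIntegrable c d) a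
      have heq : J g = fun y => ∫ t in a..y, g t := funext fun y => hJ g y
      rw [heq]; exact this
    have step : (J^[n + 1 + 1] g) x = J^[n + 1] (J g) x := by
      rw [Function.iterate_succ_apply]
    rw [step, ih (J g) hJg_cont x]
    -- now show (1/n!) ∫ (x-t)^n * (J g) t = (1/(n+1)!) ∫ (x-t)^(n+1) * g t
    -- via integration by parts
    have hparts :
        (∫ t in a..x, (x - t) ^ (n + 1) * g t)
          = ((n : ℝ) + 1) * ∫ t in a..x, (x - t) ^ n * J g t := by
      have hu : ∀ t ∈ Set.uIcc a x,
          HasDerivAt (fun t => (x - t) ^ (n + 1)) (-(((n : ℝ) + 1) * (x - t) ^ n)) t := by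
        intro t _
        have h1 : HasDerivAt (fun t : ℝ => x - t) (-1) t := by
          simpa using (hasDerivAt_id t).const_sub x
        have := h1.fun_pow (n + 1)
        simpa [mul_comm, mul_assoc, mul_left_comm] using this
      have hv : ∀ t ∈ Set.uIcc a x, HasDerivAt (J g) (g t) t := by
        intro t _
        have : HasDerivAt (fun y => ∫ s in a..y, g s) (g t) t :=
          intervalIntegral.integral_hasDerivAt_right (hg.intervalIntegrable a t)
            hg.aestronglyMeasurable.stronglyMeasurableAtFilter hg.continuousAt
        have heq : J g = fun y => ∫ s in a..y, g s := funext fun y => hJ g y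
        rw [heq]; exact this
      have hu' : IntervalIntegrable (fun t => -(((n : ℝ) + 1) * (x - t) ^ n)) volume a x := by
        apply Continuous.intervalIntegrable; continuity
      have hv' : IntervalIntegrable g volume a x := hg.intervalIntegrable a x
      have hJga : J g a = 0 := by rw [hJ]; simp
      have := intervalIntegral.integral_mul_deriv_eq_deriv_mul hu hv hu' hv'
      rw [sub_self, zero_pow (Nat.succ_ne_zero n), zero_mul, hJga, mul_zero, sub_zero,
        zero_sub] at this
      rw [this, ← intervalIntegral.integral_neg]
      rw [← intervalIntegral.integral_const_mul]
      congr 1; funext t; ring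
    rw [hparts, Nat.factorial_succ]
    push_cast
    have h1 : (n.factorial : ℝ) ≠ 0 := Nat.cast_ne_zero.mpr n.factorial_ne_zero
    have h2 : ((n : ℝ) + 1) ≠ 0 := by positivity
    field_simp

/-- Cauchy formula for repeated integration: if `f` is continuous on `[a, ∞)` and
`(J g)(x) = ∫_a^x g(t) dt`, then for every `n ≥ 1` and `x ≥ a`,
`(Jⁿ f)(x) = (1/(n−1)!) ∫_a^x (x − t)^{n−1} f(t) dt`. -/
theorem cauchy_repeated_integration
    (a : ℝ) (f : ℝ → ℝ) (hf : ContinuousOn f (Set.Ici a))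
    (J : (ℝ → ℝ) → (ℝ → ℝ)) (hJ : ∀ g : ℝ → ℝ, ∀ x : ℝ, J g x = ∫ t in a..x, g t) :
    ∀ n : ℕ, 1 ≤ n → ∀ x : ℝ, a ≤ x →
      (J^[n] f) x
        = (1 / ((n - 1).factorial : ℝ)) * ∫ t in a..x, (x - t) ^ (n - 1) * f t := by
  -- extend f to a globally continuous function
  set g : ℝ → ℝ := fun y => f (max y a) with hg_def
  have hg : Continuous g := by
    apply hf.comp_continuous (continuous_id.max continuous_const)
    intro y; exact le_max_right y a
  have hge : ∀ y, a ≤ y → g y = f y := by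
    intro y hy; simp [hg_def, max_eq_left hy]
  -- iterates agree on [a, ∞)
  have hiter : ∀ m : ℕ, ∀ y : ℝ, a ≤ y → (J^[m] f) y = (J^[m] g) y := by
    intro m
    induction m with
    | zero => intro y hy; simp [hge y hy]
    | succ m ih =>
      intro y hy
      rw [Function.iterate_succ_apply', Function.iterate_succ_apply', hJ, hJ]
      apply intervalIntegral.integral_congr
      intro t ht
      rw [Set.uIcc_of_le hy] at ht
      exact ih t ht.1
  intro n hn x hx
  obtain ⟨m, rfl⟩ : ∃ m, n = m + 1 := ⟨n - 1, (Nat.succ_pred_eq_of_pos hn).symm⟩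
  rw [hiter (m + 1) x hx, cauchy_aux a J hJ m g hg x]
  simp only [Nat.add_sub_cancel]
  congr 1
  apply intervalIntegral.integral_congr
  intro t ht
  rw [Set.uIcc_of_le hx] at ht
  simp only []
  rw [hge t ht.1]
end

section
/- Let f : ℝ → ℝ be continuous on [a, ∞). For α > 0 define the Riemann–Liouville fractional integral (I_a^α f)(x) = (1/Γ(α)) ∫_a^x (x − t)^{α−1} f(t) dt. Then the fractional integrals of f satisfy the semigroup property: for all α > 0, β > 0 and all x ≥ a, (I_a^α (I_a^β f))(x) = (I_a^{α+β} f)(x). -/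
open Real

open MeasureTheory intervalIntegral


lemma my_measurable_rpow_const (c : ℝ) : Measurable fun y : ℝ => y ^ c := by
  have h : (fun y : ℝ => y ^ c) = fun y =>
      if y = 0 then (if c = 0 then (1:ℝ) else 0)
      else if y < 0 then Real.exp (Real.log y * c) * Real.cos (c * π)
      else Real.exp (Real.log y * c) := by
    funext y
    rcases lt_trichotomy y 0 with hy | hy | hy
    · rw [if_neg hy.ne, if_pos hy, Real.rpow_def_of_neg hy, mul_comm c π]
    · subst hy
      by_cases hc : c = 0 <;> simp [hc, Real.zero_rpow]
    · rw [if_neg hy.ne', if_neg (not_lt.2 hy.le), Real.rpow_def_of_pos hy]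
  rw [h]
  have hm : Measurable fun y : ℝ => Real.exp (Real.log y * c) :=
    Real.measurable_exp.comp (Real.measurable_log.mul measurable_const)
  exact Measurable.ite (measurableSet_singleton 0) measurable_const
    (Measurable.ite (measurableSet_lt measurable_id measurable_const)
      (hm.mul measurable_const) hm)


lemma myBeta {α β : ℝ} (hα : 0 < α) (hβ : 0 < β) :
    Real.Gamma α * Real.Gamma β
      = Real.Gamma (α + β) * ∫ v in (0:ℝ)..1, v ^ (α - 1) * (1 - v) ^ (β - 1) := by
  have h := Complex.Gamma_mul_Gamma_eq_betaIntegral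
    (s := (α : ℂ)) (t := (β : ℂ)) (by simpa using hα) (by simpa using hβ)
  have hB : Complex.betaIntegral (α : ℂ) (β : ℂ)
      = ((∫ v in (0:ℝ)..1, v ^ (α - 1) * (1 - v) ^ (β - 1) : ℝ) : ℂ) := by
    rw [Complex.betaIntegral, ← intervalIntegral.integral_ofReal]
    refine intervalIntegral.integral_congr (fun v hv => ?_)
    rw [Set.uIcc_of_le (by norm_num : (0:ℝ) ≤ 1)] at hv
    rw [Complex.ofReal_mul, Complex.ofReal_cpow hv.1, Complex.ofReal_cpow (by linarith [hv.2])]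
    push_cast
    ring
  rw [hB, ← Complex.ofReal_add, Complex.Gamma_ofReal, Complex.Gamma_ofReal,
    Complex.Gamma_ofReal, ← Complex.ofReal_mul, ← Complex.ofReal_mul] at h
  exact_mod_cast h

lemma ker_intble {β : ℝ} (hβ : 0 < β) {g : ℝ → ℝ} (hg : Continuous g) (t a b : ℝ) :
    IntervalIntegrable (fun s => (t - s) ^ (β - 1) * g s) volume a b := by
  have h1 : IntervalIntegrable (fun s => (t - s) ^ (β - 1)) volume a b := by
    have := (intervalIntegrable_rpow' (show (-1:ℝ) < β - 1 by linarith)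
      (a := t - a) (b := t - b)).comp_sub_left t
    simpa using this
  exact h1.mul_continuousOn hg.continuousOn

lemma ker_intble' {α : ℝ} (hα : 0 < α) (x a b : ℝ) :
    IntervalIntegrable (fun t => (x - t) ^ (α - 1)) volume a b := by
  have := (intervalIntegrable_rpow' (show (-1:ℝ) < α - 1 by linarith)
    (a := x - a) (b := x - b)).comp_sub_left x
  simpa using this

lemma kernel_integral {β : ℝ} (hβ : 0 < β) {a t : ℝ} (h : a ≤ t) :
    ∫ s in a..t, (t - s) ^ (β - 1) = (t - a) ^ β / β := by
  rw [intervalIntegral.integral_comp_sub_left (fun u => u ^ (β - 1)) t, sub_self,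
    integral_rpow (Or.inl (by linarith))]
  rw [Real.zero_rpow (by linarith), sub_add_cancel, sub_zero]

lemma subst_beta {α β s x : ℝ} (hα : 0 < α) (hβ : 0 < β) (hs : s < x) :
    ∫ t in s..x, (x - t) ^ (α - 1) * (t - s) ^ (β - 1)
      = (x - s) ^ (α + β - 1) * (Real.Gamma α * Real.Gamma β / Real.Gamma (α + β)) := by
  set c := x - s with hc
  have hc0 : 0 < c := by simp [hc]; linarith
  have h1 : (∫ t in s..x, (x - t) ^ (α - 1) * (t - s) ^ (β - 1))
      = ∫ u in (0:ℝ)..c, (c - u) ^ (α - 1) * u ^ (β - 1) := by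
    have h := intervalIntegral.integral_comp_add_right (a := 0) (b := c)
      (fun t => (x - t) ^ (α - 1) * (t - s) ^ (β - 1)) s
    rw [show c + s = x from by rw [hc]; ring] at h
    simp only [zero_add] at h
    rw [← h]
    exact intervalIntegral.integral_congr fun u _ => by
      rw [show x - (u + s) = c - u from by rw [hc]; ring, add_sub_cancel_right]
  have h2 : (∫ u in (0:ℝ)..c, (c - u) ^ (α - 1) * u ^ (β - 1))
      = c • ∫ v in (0:ℝ)..1, (c - v * c) ^ (α - 1) * (v * c) ^ (β - 1) := by
    rw [intervalIntegral.integral_comp_mul_right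
      (fun u => (c - u) ^ (α - 1) * u ^ (β - 1)) hc0.ne', smul_comm]
    simp [hc0.ne']
  have h3 : (∫ v in (0:ℝ)..1, (c - v * c) ^ (α - 1) * (v * c) ^ (β - 1))
      = c ^ (α - 1) * c ^ (β - 1) * ∫ v in (0:ℝ)..1, (1 - v) ^ (α - 1) * v ^ (β - 1) := by
    rw [← intervalIntegral.integral_const_mul]
    refine intervalIntegral.integral_congr (fun v hv => ?_)
    rw [Set.uIcc_of_le (by norm_num : (0:ℝ) ≤ 1)] at hv
    have h1v : 0 ≤ 1 - v := by linarith [hv.2]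
    rw [show c - v * c = c * (1 - v) from by ring, mul_comm v c,
      Real.mul_rpow hc0.le h1v, Real.mul_rpow hc0.le hv.1]
    ring
  have h4 : (∫ v in (0:ℝ)..1, (1 - v) ^ (α - 1) * v ^ (β - 1))
      = Real.Gamma α * Real.Gamma β / Real.Gamma (α + β) := by
    have hbeta := myBeta hβ hα
    rw [add_comm β α] at hbeta
    have e : (∫ v in (0:ℝ)..1, (1 - v) ^ (α - 1) * v ^ (β - 1))
        = ∫ v in (0:ℝ)..1, v ^ (β - 1) * (1 - v) ^ (α - 1) :=
      intervalIntegral.integral_congr fun v _ => mul_comm _ _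
    rw [e, eq_div_iff (Real.Gamma_pos_of_pos (by linarith : (0:ℝ) < α + β)).ne']
    linear_combination -hbeta
  have hpow : c ^ (α + β - 1) = c * (c ^ (α - 1) * c ^ (β - 1)) := by
    rw [show α + β - 1 = 1 + ((α - 1) + (β - 1)) from by ring, Real.rpow_add hc0,
      Real.rpow_add hc0, Real.rpow_one]
  rw [h1, h2, h3, smul_eq_mul, h4, hpow]
  ring


lemma key {a x α β : ℝ} (hα : 0 < α) (hβ : 0 < β) (hax : a < x)
    (g : ℝ → ℝ) (hg : Continuous g) :
    (∫ t in a..x, (x - t) ^ (α - 1) * ∫ s in a..t, (t - s) ^ (β - 1) * g s)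
      = (Real.Gamma α * Real.Gamma β / Real.Gamma (α + β)) *
        ∫ s in a..x, (x - s) ^ (α + β - 1) * g s := by
  set μ : Measure ℝ := volume.restrict (Set.Ioc a x) with hμ
  set G : ℝ × ℝ → ℝ :=
    fun q => (x - q.1) ^ (α - 1) * ((q.1 - q.2) ^ (β - 1) * g q.2) with hG
  set T : Set (ℝ × ℝ) := {q | q.2 ≤ q.1} with hT
  have hTm : MeasurableSet T := measurableSet_le measurable_snd measurable_fst
  have hGm : Measurable G :=
    (((my_measurable_rpow_const (α-1)).comp (measurable_const.sub measurable_fst)).mul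
      (((my_measurable_rpow_const (β-1)).comp (measurable_fst.sub measurable_snd)).mul
        (hg.measurable.comp measurable_snd)))
  set F : ℝ × ℝ → ℝ := T.indicator G with hF
  have hFm : AEStronglyMeasurable F (μ.prod μ) :=
    ((hGm.indicator hTm).aestronglyMeasurable)
  have hFslice : ∀ t : ℝ, (fun s => F (t, s)) = (Set.Iic t).indicator (fun s => G (t, s)) := by
    intro t; funext s
    simp only [hF, hT, Set.indicator_apply, Set.mem_setOf_eq, Set.mem_Iic]
  have hFslice' : ∀ s : ℝ, (fun t => F (t, s)) = (Set.Ici s).indicator (fun t => G (t, s)) := by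
    intro t; funext s
    simp only [hF, hT, Set.indicator_apply, Set.mem_setOf_eq, Set.mem_Ici]
  -- integrability of slices
  have hsliceInt : ∀ t : ℝ, Integrable (fun s => F (t, s)) μ := by
    intro t
    rw [hFslice t]
    refine Integrable.indicator ?_ measurableSet_Iic
    have h2 : IntegrableOn (fun s => (t - s) ^ (β - 1) * g s) (Set.Ioc a x) volume :=
      (intervalIntegrable_iff_integrableOn_Ioc_of_le hax.le).mp (ker_intble hβ hg t a x)
    simpa only [hG, mul_assoc] using h2.const_mul ((x - t) ^ (α - 1))
  -- bound for g
  obtain ⟨M, hM⟩ := (isCompact_Icc (a := a) (b := x)).exists_bound_of_continuousOn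
    hg.continuousOn
  have hM0 : 0 ≤ M := le_trans (norm_nonneg _) (hM a ⟨le_refl a, hax.le⟩)
  -- integrability of the norm integrals
  have hnormInt : Integrable (fun t => ∫ s, ‖F (t, s)‖ ∂μ) μ := by
    refine Integrable.mono' (g := fun t => (x - t) ^ (α - 1) * (M * ((x - a) ^ β / β)))
      ?_ hFm.norm.integral_prod_right' ?_
    · exact (intervalIntegrable_iff_integrableOn_Ioc_of_le hax.le).mp
        ((ker_intble' hα x a x).mul_const _)
    · rw [hμ, ae_restrict_iff' measurableSet_Ioc]
      refine Filter.Eventually.of_forall (fun t ht => ?_)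
      have hxt : (0:ℝ) ≤ (x - t) ^ (α - 1) := Real.rpow_nonneg (by linarith [ht.2]) _
      have e1 : (∫ s, ‖F (t, s)‖ ∂μ)
          ≤ ∫ s in Set.Ioc a x, (Set.Iic t).indicator
              (fun s => (x - t) ^ (α - 1) * ((t - s) ^ (β - 1) * M)) s := by
        refine setIntegral_mono_on ((hsliceInt t).norm) ?_ measurableSet_Ioc ?_
        · refine Integrable.indicator ?_ measurableSet_Iic
          have h2 : IntegrableOn (fun s : ℝ => (t - s) ^ (β - 1) * M) (Set.Ioc a x) volume :=
            (intervalIntegrable_iff_integrableOn_Ioc_of_le hax.le).mp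
              (ker_intble hβ continuous_const t a x)
          simpa only [mul_assoc] using h2.const_mul ((x - t) ^ (α - 1))
        · intro s hs
          rw [show F (t, s) = ((Set.Iic t).indicator (fun s => G (t, s))) s from
            congrFun (hFslice t) s]
          by_cases hst : s ≤ t
          · rw [Set.indicator_of_mem (Set.mem_Iic.mpr hst), Set.indicator_of_mem (Set.mem_Iic.mpr hst)]
            have hts : (0:ℝ) ≤ (t - s) ^ (β - 1) := Real.rpow_nonneg (by linarith) _
            simp only [hG, Real.norm_eq_abs, abs_mul]
            rw [abs_of_nonneg hxt, abs_of_nonneg hts]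
            have hgs : |g s| ≤ M := hM s ⟨hs.1.le, hs.2⟩
            exact mul_le_mul_of_nonneg_left (mul_le_mul_of_nonneg_left hgs hts) hxt
          · rw [Set.indicator_of_notMem (fun h => hst (Set.mem_Iic.mp h)),
              Set.indicator_of_notMem (fun h => hst (Set.mem_Iic.mp h))]
            simp
      have e2 : (∫ s in Set.Ioc a x, (Set.Iic t).indicator
            (fun s => (x - t) ^ (α - 1) * ((t - s) ^ (β - 1) * M)) s)
          = (x - t) ^ (α - 1) * (M * ((t - a) ^ β / β)) := by
        rw [MeasureTheory.integral_indicator measurableSet_Iic, Measure.restrict_restrict measurableSet_Iic,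
          show Set.Iic t ∩ Set.Ioc a x = Set.Ioc a t from by
            ext r
            simp only [Set.mem_inter_iff, Set.mem_Iic, Set.mem_Ioc]
            exact ⟨fun ⟨h1, h2, _⟩ => ⟨h2, h1⟩, fun ⟨h1, h2⟩ => ⟨h2, h1, h2.trans ht.2⟩⟩]
        rw [← intervalIntegral.integral_of_le ht.1.le, intervalIntegral.integral_const_mul]
        have : (∫ s in a..t, (t - s) ^ (β - 1) * M) = (t - a) ^ β / β * M := by
          rw [intervalIntegral.integral_mul_const, kernel_integral hβ ht.1.le]
        rw [this]; ring
      have e3 : (t - a) ^ β / β ≤ (x - a) ^ β / β := by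
        gcongr
        · linarith [ht.1]
        · linarith [ht.2]
      have hnn : 0 ≤ ∫ s, ‖F (t, s)‖ ∂μ := integral_nonneg fun s => norm_nonneg _
      rw [Real.norm_eq_abs, abs_of_nonneg hnn]
      calc (∫ s, ‖F (t, s)‖ ∂μ) ≤ (x - t) ^ (α - 1) * (M * ((t - a) ^ β / β)) := e1.trans e2.le
        _ ≤ (x - t) ^ (α - 1) * (M * ((x - a) ^ β / β)) := by
            apply mul_le_mul_of_nonneg_left _ hxt
            apply mul_le_mul_of_nonneg_left e3 hM0
  have hInt : Integrable F (μ.prod μ) :=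
    (integrable_prod_iff hFm).2 ⟨Filter.Eventually.of_forall hsliceInt, hnormInt⟩
  have hswap : (∫ t, (∫ s, F (t, s) ∂μ) ∂μ) = ∫ s, (∫ t, F (t, s) ∂μ) ∂μ :=
    integral_integral_swap (f := fun t s => F (t, s)) (by exact hInt)
  have step1 : (∫ t in a..x, (x - t) ^ (α - 1) * ∫ s in a..t, (t - s) ^ (β - 1) * g s)
      = ∫ t, (∫ s, F (t, s) ∂μ) ∂μ := by
    rw [intervalIntegral.integral_of_le hax.le]
    refine setIntegral_congr_fun measurableSet_Ioc (fun t ht => ?_)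
    rw [hFslice t, MeasureTheory.integral_indicator measurableSet_Iic,
      Measure.restrict_restrict measurableSet_Iic,
      show Set.Iic t ∩ Set.Ioc a x = Set.Ioc a t from by
        ext r
        simp only [Set.mem_inter_iff, Set.mem_Iic, Set.mem_Ioc]
        exact ⟨fun ⟨h1, h2, _⟩ => ⟨h2, h1⟩, fun ⟨h1, h2⟩ => ⟨h2, h1, h2.trans ht.2⟩⟩,
      ← intervalIntegral.integral_of_le ht.1.le]
    simp only [hG]
    rw [intervalIntegral.integral_const_mul]
  have step2 : ∀ s ∈ Set.Ioo a x, (∫ t, F (t, s) ∂μ)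
      = ((x - s) ^ (α + β - 1) * (Real.Gamma α * Real.Gamma β / Real.Gamma (α + β))) * g s := by
    intro s hs
    rw [hFslice' s, MeasureTheory.integral_indicator measurableSet_Ici,
      Measure.restrict_restrict measurableSet_Ici,
      show Set.Ici s ∩ Set.Ioc a x = Set.Icc s x from by
        ext r
        simp only [Set.mem_inter_iff, Set.mem_Ici, Set.mem_Ioc, Set.mem_Icc]
        exact ⟨fun ⟨h1, _, h3⟩ => ⟨h1, h3⟩, fun ⟨h1, h2⟩ => ⟨h1, hs.1.trans_le h1, h2⟩⟩,
      integral_Icc_eq_integral_Ioc, ← intervalIntegral.integral_of_le hs.2.le]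
    have hGe : ∀ t, G (t, s) = ((x - t) ^ (α - 1) * (t - s) ^ (β - 1)) * g s := fun t => by
      simp only [hG]; ring
    simp_rw [hGe]
    rw [intervalIntegral.integral_mul_const, subst_beta hα hβ hs.2]
  calc (∫ t in a..x, (x - t) ^ (α - 1) * ∫ s in a..t, (t - s) ^ (β - 1) * g s)
      = ∫ t, (∫ s, F (t, s) ∂μ) ∂μ := step1
    _ = ∫ s, (∫ t, F (t, s) ∂μ) ∂μ := hswap
    _ = ∫ s in Set.Ioo a x, (∫ t, F (t, s) ∂μ) := by
        rw [hμ, integral_Ioc_eq_integral_Ioo]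
    _ = ∫ s in Set.Ioo a x,
          ((x - s) ^ (α + β - 1) * (Real.Gamma α * Real.Gamma β / Real.Gamma (α + β))) * g s :=
        setIntegral_congr_fun measurableSet_Ioo step2
    _ = (Real.Gamma α * Real.Gamma β / Real.Gamma (α + β)) *
          ∫ s in a..x, (x - s) ^ (α + β - 1) * g s := by
        rw [← integral_Ioc_eq_integral_Ioo, ← intervalIntegral.integral_of_le hax.le]
        have he : ∀ s, ((x - s) ^ (α + β - 1) *
              (Real.Gamma α * Real.Gamma β / Real.Gamma (α + β))) * g s
            = (Real.Gamma α * Real.Gamma β / Real.Gamma (α + β)) *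
              ((x - s) ^ (α + β - 1) * g s) := fun s => by ring
        simp_rw [he]
        rw [intervalIntegral.integral_const_mul]

/-- Semigroup property of the Riemann–Liouville fractional integral
`(I_a^α f)(x) = (1/Γ(α)) ∫_a^x (x − t)^{α−1} f(t) dt` for `f` continuous on `[a, ∞)`:
`I_a^α (I_a^β f) = I_a^{α+β} f` on `[a, ∞)`. -/
theorem riemann_liouville_semigroup
    (a : ℝ) (f : ℝ → ℝ) (hf : ContinuousOn f (Set.Ici a))
    (I : ℝ → (ℝ → ℝ) → (ℝ → ℝ))
    (hI : ∀ (γ : ℝ) (g : ℝ → ℝ) (x : ℝ),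
      I γ g x = (1 / Real.Gamma γ) * ∫ t in a..x, (x - t) ^ (γ - 1) * g t) :
    ∀ α > (0 : ℝ), ∀ β > (0 : ℝ), ∀ x : ℝ, a ≤ x →
      I α (I β f) x = I (α + β) f x := by
  intro α hα β hβ x hax
  set g : ℝ → ℝ := fun s => f (max s a) with hgdef
  have hg : Continuous g :=
    hf.comp_continuous (continuous_id.max continuous_const) (fun s => le_max_right s a)
  have hgf : ∀ s, a ≤ s → g s = f s := fun s hs => by
    simp only [hgdef, max_eq_left hs]
  have hΓα : Real.Gamma α ≠ 0 := (Real.Gamma_pos_of_pos hα).ne'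
  have hΓβ : Real.Gamma β ≠ 0 := (Real.Gamma_pos_of_pos hβ).ne'
  have hΓαβ : Real.Gamma (α + β) ≠ 0 :=
    (Real.Gamma_pos_of_pos (by linarith : (0:ℝ) < α + β)).ne'
  rcases eq_or_lt_of_le hax with heq | hlt
  · rw [hI α (I β f) x, hI (α + β) f x, ← heq, intervalIntegral.integral_same,
      intervalIntegral.integral_same, mul_zero, mul_zero]
  · rw [hI α (I β f) x, hI (α + β) f x]
    have inner : Set.EqOn (fun t => (x - t) ^ (α - 1) * I β f t)
        (fun t => (x - t) ^ (α - 1) *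
          ((1 / Real.Gamma β) * ∫ s in a..t, (t - s) ^ (β - 1) * g s)) (Set.uIcc a x) := by
      intro t ht
      rw [Set.uIcc_of_le hax] at ht
      simp only
      rw [hI β f t]
      congr 2
      refine intervalIntegral.integral_congr (fun s hs => ?_)
      rw [Set.uIcc_of_le ht.1] at hs
      rw [hgf s hs.1]
    rw [intervalIntegral.integral_congr inner]
    have e : ∀ t : ℝ, (x - t) ^ (α - 1) *
          ((1 / Real.Gamma β) * ∫ s in a..t, (t - s) ^ (β - 1) * g s)
        = (1 / Real.Gamma β) *
          ((x - t) ^ (α - 1) * ∫ s in a..t, (t - s) ^ (β - 1) * g s) := fun t => by ring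
    simp_rw [e]
    rw [intervalIntegral.integral_const_mul, key hα hβ hlt g hg]
    have eR : (∫ s in a..x, (x - s) ^ (α + β - 1) * f s)
        = ∫ s in a..x, (x - s) ^ (α + β - 1) * g s := by
      refine intervalIntegral.integral_congr (fun s hs => ?_)
      rw [Set.uIcc_of_le hax] at hs
      rw [hgf s hs.1]
    rw [eR]
    field_simp
end

section
/- Let f : ℝ → ℝ be continuous on [a, ∞) and let α > 0. Then for every x > a, the function x ↦ (I_a^{α+1} f)(x) = (1/Γ(α+1)) ∫_a^x (x − t)^{α} f(t) dt is differentiable at x, and its derivative equals (I_a^α f)(x) = (1/Γ(α)) ∫_a^x (x − t)^{α−1} f(t) dt. -/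
open Real MeasureTheory Set intervalIntegral Filter Topology

lemma rl_rpow_meas (r : ℝ) : Measurable (fun x : ℝ => x ^ r) := by
  apply measurable_of_continuousOn_compl_singleton (0 : ℝ)
  intro x hx
  exact (Real.continuousAt_rpow_const x r (Or.inl hx)).continuousWithinAt

lemma rl_ii (f : ℝ → ℝ) (hf : Continuous f) {r : ℝ} (hr : -1 < r) (s c d : ℝ) :
    IntervalIntegrable (fun t => (s - t) ^ r * f t) volume c d := by
  have h1 : IntervalIntegrable (fun u : ℝ => u ^ r) volume (s - c) (s - d) :=
    intervalIntegrable_rpow' hr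
  have h2 := h1.comp_sub_left s
  simp only [sub_sub_cancel] at h2
  exact h2.mul_continuousOn hf.continuousOn

lemma rl_subst (f : ℝ → ℝ) (r a y : ℝ) :
    (∫ t in a..y, (y - t) ^ r * f t) = ∫ u in (0:ℝ)..(y - a), u ^ r * f (y - u) := by
  have h := intervalIntegral.integral_comp_sub_left (a := a) (b := y)
    (fun u => u ^ r * f (y - u)) y
  simp only [sub_self, sub_sub_cancel] at h
  exact h

lemma rl_cont (f : ℝ → ℝ) (hf : Continuous f) {α : ℝ} (hα : 0 < α) (a : ℝ) :
    ContinuousOn (fun y => ∫ u in (0:ℝ)..(y - a), u ^ (α - 1) * f (y - u)) (Ici a) := by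
  have hr : (-1:ℝ) < α - 1 := by linarith
  intro x₀ hx₀
  set c := x₀ - a with hc
  have hc0 : (0:ℝ) ≤ c := sub_nonneg.2 hx₀
  obtain ⟨C, hC⟩ : ∃ C, ∀ w ∈ Icc (x₀ - c - 2) (x₀ + 1), ‖f w‖ ≤ C :=
    isCompact_Icc.exists_bound_of_continuousOn hf.continuousOn
  have hii : ∀ (z : ℝ) (p q : ℝ),
      IntervalIntegrable (fun u => u ^ (α - 1) * f (z - u)) volume p q := fun z p q =>
    (intervalIntegrable_rpow' hr).mul_continuousOn
      ((hf.comp (continuous_const.sub continuous_id)).continuousOn)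
  have key : ∀ z : ℝ, (∫ u in (0:ℝ)..(z - a), u ^ (α - 1) * f (z - u)) =
      (∫ u in (0:ℝ)..c, u ^ (α - 1) * f (z - u)) +
        ∫ u in c..(z - a), u ^ (α - 1) * f (z - u) := fun z =>
    (intervalIntegral.integral_add_adjacent_intervals (hii z 0 c) (hii z c (z - a))).symm
  have hA : Tendsto (fun z => ∫ u in (0:ℝ)..c, u ^ (α - 1) * f (z - u)) (𝓝 x₀)
      (𝓝 (∫ u in (0:ℝ)..c, u ^ (α - 1) * f (x₀ - u))) := by
    apply intervalIntegral.tendsto_integral_filter_of_dominated_convergence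
        (bound := fun u => C * u ^ (α - 1))
    · filter_upwards with z
      exact ((rl_rpow_meas (α - 1)).mul
        ((hf.comp (continuous_const.sub continuous_id)).measurable)).aestronglyMeasurable
    · filter_upwards [Metric.ball_mem_nhds x₀ one_pos] with z hz
      filter_upwards with u hu
      rw [uIoc_of_le hc0] at hu
      rw [Metric.mem_ball, Real.dist_eq] at hz
      have hu0 : (0:ℝ) < u := hu.1
      have hzx := abs_lt.1 hz
      have hb : ‖f (z - u)‖ ≤ C := by
        apply hC
        exact ⟨by linarith [hu.2], by linarith⟩
      have h1 : (0:ℝ) ≤ u ^ (α - 1) := Real.rpow_nonneg hu0.le _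
      calc ‖u ^ (α - 1) * f (z - u)‖ = u ^ (α - 1) * ‖f (z - u)‖ := by
            rw [norm_mul, Real.norm_of_nonneg h1]
        _ ≤ u ^ (α - 1) * C := by gcongr
        _ = C * u ^ (α - 1) := mul_comm _ _
    · exact (intervalIntegrable_rpow' hr).const_mul C
    · filter_upwards with u _
      exact ((continuous_const.mul
        (hf.comp (continuous_id.sub continuous_const))).tendsto x₀)
  have hB : Tendsto (fun z => ∫ u in c..(z - a), u ^ (α - 1) * f (z - u)) (𝓝[Ici a] x₀)
      (𝓝 0) := by
    apply squeeze_zero_norm'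
      (a := fun z => |C * (((z - a) ^ α) - c ^ α) / α|)
    · filter_upwards [inter_mem_nhdsWithin (Ici a) (Metric.ball_mem_nhds x₀ one_pos)]
        with z hz
      obtain ⟨hza, hzb⟩ := hz
      rw [Metric.mem_ball, Real.dist_eq] at hzb
      have hza' : (0:ℝ) ≤ z - a := sub_nonneg.2 hza
      have hzx := abs_lt.1 hzb
      have hb1 : ‖∫ u in c..(z - a), u ^ (α - 1) * f (z - u)‖ ≤
          |∫ u in c..(z - a), C * u ^ (α - 1)| := by
        apply intervalIntegral.norm_integral_le_abs_of_norm_le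
        · filter_upwards [self_mem_ae_restrict measurableSet_uIoc] with u hu
          have hu0 : (0:ℝ) < u := lt_of_le_of_lt (le_min hc0 hza') hu.1
          have huU : u ≤ max c (z - a) := hu.2
          have h1 : (0:ℝ) ≤ u ^ (α - 1) := Real.rpow_nonneg hu0.le _
          have hb : ‖f (z - u)‖ ≤ C := by
            apply hC
            have hucc : u ≤ c + 1 :=
              le_trans huU (max_le (by linarith) (by rw [hc]; linarith))
            exact ⟨by linarith, by linarith⟩
          calc ‖u ^ (α - 1) * f (z - u)‖ = u ^ (α - 1) * ‖f (z - u)‖ := by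
                rw [norm_mul, Real.norm_of_nonneg h1]
            _ ≤ u ^ (α - 1) * C := by gcongr
            _ = C * u ^ (α - 1) := mul_comm _ _
        · exact (intervalIntegrable_rpow' hr).const_mul C
      have hval : (∫ u in c..(z - a), C * u ^ (α - 1)) =
          C * (((z - a) ^ α) - c ^ α) / α := by
        rw [intervalIntegral.integral_const_mul, integral_rpow (Or.inl hr)]
        rw [sub_add_cancel]
        ring
      rw [hval] at hb1
      exact hb1
    · have hcont : ContinuousAt (fun z : ℝ => |C * (((z - a) ^ α) - c ^ α) / α|) x₀ := by
        apply ContinuousAt.abs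
        apply ContinuousAt.div_const
        apply ContinuousAt.mul continuousAt_const
        apply ContinuousAt.sub _ continuousAt_const
        exact (Real.continuousAt_rpow_const _ _ (Or.inr hα.le)).comp
          ((continuous_id.sub continuous_const).continuousAt)
      have := (hcont.tendsto).mono_left (nhdsWithin_le_nhds (s := Ici a))
      simpa [← hc, sub_self] using this
  have hAB := (hA.mono_left nhdsWithin_le_nhds).add hB
  rw [ContinuousWithinAt]
  rw [add_zero] at hAB
  exact hAB.congr fun z => (key z).symm

lemma rl_pow_int {α : ℝ} (hα : 0 < α) (c C : ℝ) :
    (∫ u in (0:ℝ)..c, u ^ (α - 1) * C) = c ^ α / α * C := by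
  rw [intervalIntegral.integral_mul_const, integral_rpow (Or.inl (by linarith)),
    sub_add_cancel, Real.zero_rpow hα.ne', sub_zero]

lemma rl_fubini (f : ℝ → ℝ) (hf : Continuous f) {α : ℝ} (hα : 0 < α) (a b : ℝ)
    (hab : a ≤ b) :
    (∫ t in a..b, (b - t) ^ α * f t) =
      α * ∫ s in a..b, ∫ t in a..s, (s - t) ^ (α - 1) * f t := by
  have hr : (-1:ℝ) < α - 1 := by linarith
  set μ := volume.restrict (Ioc a b) with hμ
  set T : Set (ℝ × ℝ) := {p | p.2 ≤ p.1} with hT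
  have hTm : MeasurableSet T := measurableSet_le measurable_snd measurable_fst
  set g : ℝ × ℝ → ℝ := fun p => (p.1 - p.2) ^ (α - 1) * f p.2 with hg
  have hgm : Measurable g :=
    ((rl_rpow_meas (α - 1)).comp (measurable_fst.sub measurable_snd)).mul
      (hf.measurable.comp measurable_snd)
  set k : ℝ × ℝ → ℝ := T.indicator g with hk
  have hkm : Measurable k := hgm.indicator hTm
  have hkaesm : AEStronglyMeasurable k (μ.prod μ) := hkm.aestronglyMeasurable
  -- slice as indicator in t
  have hslice_eq : ∀ s : ℝ, (fun t => k (s, t)) =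
      (Iic s).indicator (fun t => (s - t) ^ (α - 1) * f t) := by
    intro s; funext t
    simp only [hk, hT, hg, indicator_apply, mem_setOf_eq, mem_Iic]
  have hIic : ∀ s ∈ Ioc a b, Iic s ∩ Ioc a b = Ioc a s := by
    intro s hs
    ext t
    simp only [mem_inter_iff, mem_Iic, mem_Ioc]
    exact ⟨fun ⟨h1, h2, _⟩ => ⟨h2, h1⟩, fun ⟨h1, h2⟩ => ⟨h2, h1, le_trans h2 hs.2⟩⟩
  have hslice : ∀ s ∈ Ioc a b, Integrable (fun t => k (s, t)) μ := by
    intro s hs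
    rw [hslice_eq s, hμ, integrable_indicator_iff measurableSet_Iic, IntegrableOn,
      Measure.restrict_restrict measurableSet_Iic, hIic s hs]
    exact (rl_ii f hf hr s a s).1
  obtain ⟨C, hC⟩ := isCompact_Icc.exists_bound_of_continuousOn (s := Icc a b)
    hf.continuousOn
  have hC0 : 0 ≤ C := le_trans (norm_nonneg _) (hC a ⟨le_rfl, hab⟩)
  -- slice norm integral computation & bound
  have hnorm : ∀ s ∈ Ioc a b, (∫ t, ‖k (s, t)‖ ∂μ) ≤ C * ((b - a) ^ α / α) := by
    intro s hs
    have h1 : (fun t => ‖k (s, t)‖) =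
        (Iic s).indicator (fun t => ‖(s - t) ^ (α - 1) * f t‖) := by
      funext t
      rw [show k (s, t) = ((Iic s).indicator (fun t => (s - t) ^ (α - 1) * f t)) t from
        congrFun (hslice_eq s) t]
      exact norm_indicator_eq_indicator_norm _ _
    rw [h1, hμ, MeasureTheory.integral_indicator measurableSet_Iic,
      Measure.restrict_restrict measurableSet_Iic, hIic s hs]
    have hint1 : IntegrableOn (fun t => ‖(s - t) ^ (α - 1) * f t‖) (Ioc a s) :=
      ((rl_ii f hf hr s a s).1).norm
    have hint2 : IntegrableOn (fun t => (s - t) ^ (α - 1) * C) (Ioc a s) :=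
      (rl_ii (fun _ => C) continuous_const hr s a s).1
    have hmono : (∫ t in Ioc a s, ‖(s - t) ^ (α - 1) * f t‖) ≤
        ∫ t in Ioc a s, (s - t) ^ (α - 1) * C := by
      apply setIntegral_mono_on hint1 hint2 measurableSet_Ioc
      intro t ht
      have hst : (0:ℝ) ≤ s - t := sub_nonneg.2 ht.2
      have h2 : (0:ℝ) ≤ (s - t) ^ (α - 1) := Real.rpow_nonneg hst _
      have h3 : ‖f t‖ ≤ C := hC t ⟨ht.1.le, le_trans ht.2 hs.2⟩
      calc ‖(s - t) ^ (α - 1) * f t‖ = (s - t) ^ (α - 1) * ‖f t‖ := by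
            rw [norm_mul, Real.norm_of_nonneg h2]
        _ ≤ (s - t) ^ (α - 1) * C := by gcongr
    have hval : (∫ t in Ioc a s, (s - t) ^ (α - 1) * C) = (s - a) ^ α / α * C := by
      rw [← intervalIntegral.integral_of_le hs.1.le, rl_subst (fun _ => C) (α - 1) a s,
        rl_pow_int hα]
    have hle : (s - a) ^ α / α * C ≤ C * ((b - a) ^ α / α) := by
      have h4 : (s - a) ^ α ≤ (b - a) ^ α :=
        Real.rpow_le_rpow (by linarith [hs.1.le]) (by linarith [hs.2]) hα.le
      rw [mul_comm]
      exact mul_le_mul_of_nonneg_left (by gcongr) hC0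
    exact le_trans (le_trans hmono (le_of_eq hval)) hle
  -- integrability on the product
  have hint : Integrable (Function.uncurry fun s t => k (s, t)) (μ.prod μ) := by
    rw [show (Function.uncurry fun s t => k (s, t)) = k from rfl]
    refine (integrable_prod_iff hkaesm).mpr ⟨?_, ?_⟩
    · filter_upwards [ae_restrict_mem measurableSet_Ioc] with s hs
      exact hslice s hs
    · apply Integrable.mono' (g := fun _ => C * ((b - a) ^ α / α))
        (integrableOn_const measure_Ioc_lt_top.ne)
        hkaesm.norm.integral_prod_right'
      filter_upwards [ae_restrict_mem measurableSet_Ioc] with s hs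
      rw [Real.norm_of_nonneg (integral_nonneg fun t => norm_nonneg _)]
      exact hnorm s hs
  have swap := integral_integral_swap hint
  -- left side computation
  have hL : (∫ s, (∫ t, k (s, t) ∂μ) ∂μ) =
      ∫ s in Ioc a b, (∫ t in a..s, (s - t) ^ (α - 1) * f t) := by
    apply MeasureTheory.integral_congr_ae
    filter_upwards [ae_restrict_mem measurableSet_Ioc] with s hs
    rw [hslice_eq s, hμ, MeasureTheory.integral_indicator measurableSet_Iic,
      Measure.restrict_restrict measurableSet_Iic, hIic s hs,
      ← intervalIntegral.integral_of_le hs.1.le]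
  -- right side computation
  have hR : (∫ t, (∫ s, k (s, t) ∂μ) ∂μ) =
      ∫ t in Ioc a b, (b - t) ^ α / α * f t := by
    apply MeasureTheory.integral_congr_ae
    filter_upwards [ae_restrict_mem measurableSet_Ioc] with t ht
    have h1 : (fun s => k (s, t)) =
        (Ici t).indicator (fun s => (s - t) ^ (α - 1) * f t) := by
      funext s
      simp only [hk, hT, hg, indicator_apply, mem_setOf_eq, mem_Ici]
    have h2 : Ici t ∩ Ioc a b = Icc t b := by
      ext s
      simp only [mem_inter_iff, mem_Ici, mem_Ioc, mem_Icc]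
      exact ⟨fun ⟨h1, _, h3⟩ => ⟨h1, h3⟩, fun ⟨h1, h2⟩ => ⟨h1, lt_of_lt_of_le ht.1 h1, h2⟩⟩
    rw [h1, hμ, MeasureTheory.integral_indicator measurableSet_Ici,
      Measure.restrict_restrict measurableSet_Ici, h2, integral_Icc_eq_integral_Ioc,
      ← intervalIntegral.integral_of_le ht.2]
    have h3 := intervalIntegral.integral_comp_sub_right
      (a := t) (b := b) (fun u => u ^ (α - 1) * f t) t
    rw [h3, sub_self, rl_pow_int hα, mul_comm ((b - t) ^ α / α) (f t), mul_comm]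
  -- conclude
  rw [intervalIntegral.integral_of_le hab]
  rw [intervalIntegral.integral_of_le hab]
  rw [← hL, swap, hR, ← MeasureTheory.integral_const_mul]
  apply MeasureTheory.integral_congr_ae
  filter_upwards with t
  field_simp

/-- For `f` continuous on `[a, ∞)` and `α > 0`, the function
`x ↦ (I_a^{α+1} f)(x) = (1/Γ(α+1)) ∫_a^x (x − t)^α f(t) dt` is differentiable at every
`x > a` and its derivative equals `(I_a^α f)(x) = (1/Γ(α)) ∫_a^x (x − t)^{α−1} f(t) dt`. -/
theorem riemann_liouville_integral_deriv
    (a : ℝ) (f : ℝ → ℝ) (hf : ContinuousOn f (Set.Ici a))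
    (α : ℝ) (hα : 0 < α) :
    ∀ x : ℝ, a < x →
      HasDerivAt (fun y => (1 / Real.Gamma (α + 1)) * ∫ t in a..y, (y - t) ^ α * f t)
        ((1 / Real.Gamma α) * ∫ t in a..x, (x - t) ^ (α - 1) * f t) x := by
  intro x hx
  set fc : ℝ → ℝ := fun t => f (max t a) with hfc
  have hfc_cont : Continuous fc :=
    hf.comp_continuous (continuous_id.max continuous_const) (fun t => le_max_right t a)
  have hfc_eq : ∀ t, a ≤ t → fc t = f t := fun t ht => by
    rw [hfc]; simp [max_eq_left ht]
  set G : ℝ → ℝ := fun y => ∫ u in (0:ℝ)..(y - a), u ^ (α - 1) * fc (y - u) with hG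
  have hGc : ContinuousOn G (Ici a) := rl_cont fc hfc_cont hα a
  have hGii : IntervalIntegrable G volume a x :=
    (hGc.mono (by rw [uIcc_of_le hx.le]; exact Icc_subset_Ici_self)).intervalIntegrable
  have hmeasG : StronglyMeasurableAtFilter G (𝓝 x) volume :=
    ContinuousAt.stronglyMeasurableAtFilter isOpen_Ioi
      (fun y hy => (hGc y (le_of_lt hy)).continuousAt (Ici_mem_nhds hy)) x hx
  have hGx_cont : ContinuousAt G x := (hGc x hx.le).continuousAt (Ici_mem_nhds hx)
  have hftc : HasDerivAt (fun y => ∫ s in a..y, G s) (G x) x :=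
    intervalIntegral.integral_hasDerivAt_right hGii hmeasG hGx_cont
  have hΓ : Real.Gamma (α + 1) = α * Real.Gamma α := Real.Gamma_add_one hα.ne'
  have hΓpos : 0 < Real.Gamma α := Real.Gamma_pos_of_pos hα
  have hψ : HasDerivAt (fun y => (1 / Real.Gamma α) * ∫ s in a..y, G s)
      ((1 / Real.Gamma α) * G x) x := hftc.const_mul _
  have hGx : G x = ∫ t in a..x, (x - t) ^ (α - 1) * f t := by
    show (∫ u in (0:ℝ)..(x - a), u ^ (α - 1) * fc (x - u)) = _
    rw [← rl_subst fc (α - 1) a x]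
    apply intervalIntegral.integral_congr
    intro t ht
    rw [uIcc_of_le hx.le] at ht
    simp only [hfc_eq t ht.1]
  have hev : (fun y => (1 / Real.Gamma (α + 1)) * ∫ t in a..y, (y - t) ^ α * f t)
      =ᶠ[𝓝 x] (fun y => (1 / Real.Gamma α) * ∫ s in a..y, G s) := by
    filter_upwards [Ioi_mem_nhds hx] with y hy
    have hy' : a ≤ y := le_of_lt hy
    have e1 : (∫ t in a..y, (y - t) ^ α * f t) = ∫ t in a..y, (y - t) ^ α * fc t :=
      intervalIntegral.integral_congr (fun t ht => by
        rw [uIcc_of_le hy'] at ht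
        simp only [hfc_eq t ht.1])
    have e2 := rl_fubini fc hfc_cont hα a y hy'
    have e3 : (fun s => ∫ t in a..s, (s - t) ^ (α - 1) * fc t) = G := by
      funext s; exact rl_subst fc (α - 1) a s
    rw [e1, e2, e3, hΓ, ← mul_assoc]
    congr 1
    field_simp
  rw [← hGx]
  exact hψ.congr_of_eventuallyEq hev
end
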